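/- With the quadratic symbols q₀₀, q₁₁ and the symbol a := [(m − 2ξ₁ξ₂)q₁₁ + 2(ξ₁² + m)(ξ₂² + m)q₀₀]/Δ, define a₀(ξ) := −(i/2)g⁰¹_{uₜ} − (g¹¹_u/(4m))ξ − (i/(2m))(g⁰¹_{uₜ} + g¹¹_{uₓ}/2)ξ² and a₁(ξ) := g¹¹_u/8 − f_{uₜuₜ}/2 + (i/8)g¹¹_{uₓ}ξ + (ξ²/(4m))(g¹¹_u − 2f_{uₜuₜ}). Then there exists C > 0 such that for all real ξ₁, ξ₂ with ⟨ξ₁⟩ ≤ ⟨ξ₂⟩/20 one has |a(ξ₁,ξ₂) − a₀(ξ₁)ξ₂ − a₁(ξ₁)| ≤ C(1 + ξ₁⁴)/|ξ₂|, where ⟨ξ⟩ := (1 + ξ²)^{1/2}. -/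

import Mathlib

open Complex

/-- The quadratic symbol `q₀₀(ξ₁,ξ₂) = f_{uₜuₜ} + i g⁰¹_{uₜ}(ξ₁+ξ₂)`. -/
noncomputable def q00 (futut g01ut : ℝ) (ξ₁ ξ₂ : ℝ) : ℂ :=
  (futut : ℂ) + Complex.I * g01ut * ((ξ₁ : ℂ) + ξ₂)

/-- The quadratic symbol
`q₁₁(ξ₁,ξ₂) = f_{uu} − (g¹¹_u/2)(ξ₁² + ξ₂²) − (i g¹¹_{uₓ}/2)(ξ₁ξ₂² + ξ₂ξ₁²)`. -/
noncomputable def q11 (fuu g11u g11ux : ℝ) (ξ₁ ξ₂ : ℝ) : ℂ :=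
  (fuu : ℂ) - (g11u : ℂ)/2 * ((ξ₁ : ℂ)^2 + (ξ₂ : ℂ)^2)
    - Complex.I * g11ux / 2 * ((ξ₁ : ℂ) * (ξ₂ : ℂ)^2 + (ξ₂ : ℂ) * (ξ₁ : ℂ)^2)

/-- The denominator `Δ(ξ₁,ξ₂) = (m − 2ξ₁ξ₂)² − 4(ξ₁² + m)(ξ₂² + m)` as a
complex number. -/
noncomputable def Δc (m ξ₁ ξ₂ : ℝ) : ℂ :=
  ((m : ℂ) - 2*ξ₁*ξ₂)^2 - 4*((ξ₁ : ℂ)^2 + m)*((ξ₂ : ℂ)^2 + m)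

/-- The normal form symbol `a = [(m − 2ξ₁ξ₂)q₁₁ + 2(ξ₁² + m)(ξ₂² + m)q₀₀]/Δ`. -/
noncomputable def aSym (m fuu futut g01ut g11u g11ux : ℝ) (ξ₁ ξ₂ : ℝ) : ℂ :=
  (((m : ℂ) - 2*ξ₁*ξ₂) * q11 fuu g11u g11ux ξ₁ ξ₂
    + 2*((ξ₁ : ℂ)^2 + m)*((ξ₂ : ℂ)^2 + m) * q00 futut g01ut ξ₁ ξ₂) / Δc m ξ₁ ξ₂

/-- First low–high Taylor coefficient
`a₀(ξ) = −(i/2)g⁰¹_{uₜ} − (g¹¹_u/(4m))ξ − (i/(2m))(g⁰¹_{uₜ} + g¹¹_{uₓ}/2)ξ²`. -/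
noncomputable def a0 (m g01ut g11u g11ux : ℝ) (ξ : ℝ) : ℂ :=
  -(Complex.I/2) * g01ut - (g11u : ℂ)/(4*m) * ξ
    - Complex.I/(2*m) * ((g01ut : ℂ) + (g11ux : ℂ)/2) * (ξ : ℂ)^2

/-- Second low–high Taylor coefficient
`a₁(ξ) = g¹¹_u/8 − f_{uₜuₜ}/2 + (i/8)g¹¹_{uₓ}ξ + (ξ²/(4m))(g¹¹_u − 2f_{uₜuₜ})`. -/
noncomputable def a1 (m futut g11u g11ux : ℝ) (ξ : ℝ) : ℂ :=
  (g11u : ℂ)/8 - (futut : ℂ)/2 + Complex.I/8 * g11ux * ξ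
    + (ξ : ℂ)^2/(4*m) * ((g11u : ℂ) - 2*futut)
open Complex

-- auxiliary: bound a degree-4 complex-coefficient polynomial of a real variable
lemma polyBound (c4 c3 c2 c1 c0 : ℂ) (s : ℝ) :
    ‖c4*(s:ℂ)^4 + c3*(s:ℂ)^3 + c2*(s:ℂ)^2 + c1*(s:ℂ) + c0‖
      ≤ (‖c4‖ + ‖c3‖ + ‖c2‖ + ‖c1‖ + ‖c0‖)
        * (1 + s^4) := by
  have t0 : (0:ℝ) ≤ |s| := abs_nonneg s
  have t4 : |s|^4 ≤ 1 + s^4 := by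
    rw [← _root_.abs_pow, _root_.abs_of_nonneg (by positivity : (0:ℝ) ≤ s^4)]; linarith
  have t3 : |s|^3 ≤ 1 + s^4 := by
    have h4 : |s|^4 = s^4 := by rw [← _root_.abs_pow, _root_.abs_of_nonneg (by positivity : (0:ℝ) ≤ s^4)]
    nlinarith [sq_nonneg (|s|^2 - |s|), sq_nonneg (|s|^2 - 1), sq_nonneg (|s| - 1)]
  have t2 : |s|^2 ≤ 1 + s^4 := by
    have h4 : |s|^4 = s^4 := by rw [← _root_.abs_pow, _root_.abs_of_nonneg (by positivity : (0:ℝ) ≤ s^4)]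
    nlinarith [sq_nonneg (|s|^2 - 1)]
  have t1 : |s| ≤ 1 + s^4 := by
    have h4 : |s|^4 = s^4 := by rw [← _root_.abs_pow, _root_.abs_of_nonneg (by positivity : (0:ℝ) ≤ s^4)]
    nlinarith [sq_nonneg (|s|^2 - 1), sq_nonneg (|s| - 1), sq_nonneg (|s| + 1), sq_nonneg (|s|^2 - |s|)]
  have h1 : ‖c4*(s:ℂ)^4 + c3*(s:ℂ)^3 + c2*(s:ℂ)^2 + c1*(s:ℂ) + c0‖
      ≤ ‖c4‖ * |s|^4 + ‖c3‖ * |s|^3 + ‖c2‖ * |s|^2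
        + ‖c1‖ * |s| + ‖c0‖ := by
    calc ‖c4*(s:ℂ)^4 + c3*(s:ℂ)^3 + c2*(s:ℂ)^2 + c1*(s:ℂ) + c0‖
        ≤ ‖c4*(s:ℂ)^4 + c3*(s:ℂ)^3 + c2*(s:ℂ)^2 + c1*(s:ℂ)‖ + ‖c0‖ :=
          norm_add_le _ _
      _ ≤ ‖c4*(s:ℂ)^4 + c3*(s:ℂ)^3 + c2*(s:ℂ)^2‖ + ‖c1*(s:ℂ)‖
            + ‖c0‖ := by gcongr; exact norm_add_le _ _
      _ ≤ ‖c4*(s:ℂ)^4 + c3*(s:ℂ)^3‖ + ‖c2*(s:ℂ)^2‖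
            + ‖c1*(s:ℂ)‖ + ‖c0‖ := by gcongr; exact norm_add_le _ _
      _ ≤ ‖c4*(s:ℂ)^4‖ + ‖c3*(s:ℂ)^3‖ + ‖c2*(s:ℂ)^2‖
            + ‖c1*(s:ℂ)‖ + ‖c0‖ := by gcongr; exact norm_add_le _ _
      _ = ‖c4‖ * |s|^4 + ‖c3‖ * |s|^3 + ‖c2‖ * |s|^2
            + ‖c1‖ * |s| + ‖c0‖ := by
          simp [norm_mul, norm_pow, Complex.norm_real]
  refine h1.trans ?_
  have h40 := norm_nonneg c4
  have h30 := norm_nonneg c3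
  have h20 := norm_nonneg c2
  have h10 := norm_nonneg c1
  have h00 := norm_nonneg c0
  nlinarith [mul_le_mul_of_nonneg_left t4 h40, mul_le_mul_of_nonneg_left t3 h30,
    mul_le_mul_of_nonneg_left t2 h20, mul_le_mul_of_nonneg_left t1 h10,
    mul_nonneg h00 (by positivity : (0:ℝ) ≤ s^4)]

lemma divMulCancelAux (x c d : ℂ) (hd : d ≠ 0) : x / d * (c * d) = x * c := by
  field_simp

set_option maxHeartbeats 1000000 in
theorem aSym_low_high_expansion (m fuu futut futu g01u g01ut g01ux g11u g11ut g11ux : ℝ)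
    (hm : 0 < m) :
    ∃ C > 0, ∀ ξ₁ ξ₂ : ℝ,
      Real.sqrt (1 + ξ₁^2) ≤ Real.sqrt (1 + ξ₂^2) / 20 →
      ‖aSym m fuu futut g01ut g11u g11ux ξ₁ ξ₂
          - a0 m g01ut g11u g11ux ξ₁ * ξ₂ - a1 m futut g11u g11ux ξ₁‖
        ≤ C * (1 + ξ₁^4) / |ξ₂| := by
  set c14 : ℂ := ((-4*m*g11ux - 8*m*g01ut : ℝ) : ℂ) * Complex.I with hc14
  set c13 : ℂ := ((4*m*g11u - 8*m*futut : ℝ) : ℂ) with hc13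
  set c12 : ℂ := ((-3*m^2*g11ux - 6*m^2*g01ut : ℝ) : ℂ) * Complex.I with hc12
  set c11 : ℂ := ((-8*m*fuu - m^2*g11u - 8*m^2*futut : ℝ) : ℂ) with hc11
  set c10 : ℂ := ((2*m^3*g01ut : ℝ) : ℂ) * Complex.I with hc10
  set c04 : ℂ := ((4*m*g11u - 8*m*futut : ℝ) : ℂ) with hc04
  set c03 : ℂ := ((2*m^2*g11ux + 8*m^2*g01ut : ℝ) : ℂ) * Complex.I with hc03
  set c02 : ℂ := ((3*m^2*g11u - 6*m^2*futut : ℝ) : ℂ) with hc02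
  set c01 : ℂ := ((3/2*m^3*g11ux + 8*m^3*g01ut : ℝ) : ℂ) * Complex.I with hc01
  set c00 : ℂ := ((4*m^2*fuu + 3/2*m^3*g11u + 2*m^3*futut : ℝ) : ℂ) with hc00
  set S1 : ℝ := ‖c14‖ + ‖c13‖ + ‖c12‖ + ‖c11‖
      + ‖c10‖ with hS1
  set S0 : ℝ := ‖c04‖ + ‖c03‖ + ‖c02‖ + ‖c01‖
      + ‖c00‖ with hS0
  have hS1nn : 0 ≤ S1 := by
    have := norm_nonneg c14; have := norm_nonneg c13
    have := norm_nonneg c12; have := norm_nonneg c11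
    have := norm_nonneg c10; rw [hS1]; linarith
  have hS0nn : 0 ≤ S0 := by
    have := norm_nonneg c04; have := norm_nonneg c03
    have := norm_nonneg c02; have := norm_nonneg c01
    have := norm_nonneg c00; rw [hS0]; linarith
  refine ⟨(S1 + S0 + 1) / (12 * m^2), by positivity, ?_⟩
  intro ξ₁ ξ₂ hlh
  have hsq : 400 * (1 + ξ₁^2) ≤ 1 + ξ₂^2 := by
    have h1 : (0:ℝ) ≤ Real.sqrt (1 + ξ₁^2) := Real.sqrt_nonneg _
    have h2 : Real.sqrt (1 + ξ₁^2) ^ 2 ≤ (Real.sqrt (1 + ξ₂^2) / 20) ^ 2 :=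
      pow_le_pow_left₀ h1 hlh 2
    rw [Real.sq_sqrt (by positivity), div_pow, Real.sq_sqrt (by positivity)] at h2
    linarith
  have hxi2 : 1 ≤ |ξ₂| := by
    nlinarith [_root_.sq_abs ξ₂, abs_nonneg ξ₂, sq_nonneg ξ₁]
  have hxi2ne : ξ₂ ≠ 0 := by
    intro h; rw [h] at hxi2; norm_num at hxi2
  have hx2pos : (0:ℝ) < ξ₂^2 := by nlinarith [_root_.sq_abs ξ₂]
  have hΔr : Δc m ξ₁ ξ₂ = ((-(4*m*(ξ₁^2 + ξ₂^2 + ξ₁*ξ₂)) - 3*m^2 : ℝ) : ℂ) := by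
    rw [Δc]; push_cast; ring
  have hsum : 0 ≤ ξ₁^2 + ξ₂^2 + ξ₁*ξ₂ := by nlinarith [sq_nonneg (ξ₁ + ξ₂)]
  have habsΔ : ‖Δc m ξ₁ ξ₂‖ = 4*m*(ξ₁^2 + ξ₂^2 + ξ₁*ξ₂) + 3*m^2 := by
    rw [hΔr, Complex.norm_real, Real.norm_eq_abs, abs_of_nonpos (by nlinarith)]; ring
  have hΔge : 3*m*ξ₂^2 ≤ ‖Δc m ξ₁ ξ₂‖ := by
    rw [habsΔ]; nlinarith [sq_nonneg (2*ξ₁ + ξ₂)]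
  have hΔne : Δc m ξ₁ ξ₂ ≠ 0 := by
    intro h; rw [h, norm_zero] at hΔge; nlinarith
  have hmc : ((m:ℝ) : ℂ) ≠ 0 := Complex.ofReal_ne_zero.mpr hm.ne'
  have h4m : ((4*m : ℝ) : ℂ) ≠ 0 := Complex.ofReal_ne_zero.mpr (by positivity)
  have ha0 : ((4*m : ℝ) : ℂ) * a0 m g01ut g11u g11ux ξ₁
      = -2*Complex.I*m*g01ut - (g11u:ℂ)*ξ₁ - 2*Complex.I*((g01ut:ℂ) + (g11ux:ℂ)/2)*(ξ₁:ℂ)^2 := by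
    rw [a0]; field_simp; push_cast; ring
  have ha1 : ((4*m : ℝ) : ℂ) * a1 m futut g11u g11ux ξ₁
      = (g11u:ℂ)/2*m - 2*(futut:ℂ)*m + Complex.I/2*(g11ux:ℂ)*m*(ξ₁:ℂ)
        + (ξ₁:ℂ)^2*((g11u:ℂ) - 2*(futut:ℂ)) := by
    rw [a1]; field_simp; push_cast; ring
  have hsplit : ∀ X A B : ℂ,
      (X / Δc m ξ₁ ξ₂ - A * (ξ₂:ℂ) - B) * (((4*m : ℝ) : ℂ) * Δc m ξ₁ ξ₂)
      = X * ((4*m : ℝ) : ℂ) - (((4*m : ℝ) : ℂ) * A) * (ξ₂:ℂ) * Δc m ξ₁ ξ₂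
        - (((4*m : ℝ) : ℂ) * B) * Δc m ξ₁ ξ₂ := by
    intro X A B; field_simp
  have key : aSym m fuu futut g01ut g11u g11ux ξ₁ ξ₂
      - a0 m g01ut g11u g11ux ξ₁ * ξ₂ - a1 m futut g11u g11ux ξ₁
      = ((ξ₂:ℂ) * (c14*(ξ₁:ℂ)^4 + c13*(ξ₁:ℂ)^3 + c12*(ξ₁:ℂ)^2 + c11*(ξ₁:ℂ) + c10)
          + (c04*(ξ₁:ℂ)^4 + c03*(ξ₁:ℂ)^3 + c02*(ξ₁:ℂ)^2 + c01*(ξ₁:ℂ) + c00))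
        / (((4*m : ℝ) : ℂ) * Δc m ξ₁ ξ₂) := by
    rw [hc14, hc13, hc12, hc11, hc10, hc04, hc03, hc02, hc01, hc00]
    rw [eq_div_iff (mul_ne_zero h4m hΔne), aSym, hsplit, ha0, ha1, q00, q11, Δc]
    push_cast
    ring
  rw [key, norm_div, norm_mul, Complex.norm_real, Real.norm_eq_abs,
    abs_of_pos (by positivity : (0:ℝ) < 4*m)]
  have hb1 : ‖c14*(ξ₁:ℂ)^4 + c13*(ξ₁:ℂ)^3 + c12*(ξ₁:ℂ)^2 + c11*(ξ₁:ℂ) + c10‖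
      ≤ S1 * (1 + ξ₁^4) := polyBound c14 c13 c12 c11 c10 ξ₁
  have hb0 : ‖c04*(ξ₁:ℂ)^4 + c03*(ξ₁:ℂ)^3 + c02*(ξ₁:ℂ)^2 + c01*(ξ₁:ℂ) + c00‖
      ≤ S0 * (1 + ξ₁^4) := polyBound c04 c03 c02 c01 c00 ξ₁
  have hq : (0:ℝ) ≤ 1 + ξ₁^4 := by positivity
  have hnum : ‖(ξ₂:ℂ) * (c14*(ξ₁:ℂ)^4 + c13*(ξ₁:ℂ)^3 + c12*(ξ₁:ℂ)^2
        + c11*(ξ₁:ℂ) + c10)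
      + (c04*(ξ₁:ℂ)^4 + c03*(ξ₁:ℂ)^3 + c02*(ξ₁:ℂ)^2 + c01*(ξ₁:ℂ) + c00)‖
      ≤ (S1 + S0 + 1) * (1 + ξ₁^4) * |ξ₂| := by
    calc ‖(ξ₂:ℂ) * (c14*(ξ₁:ℂ)^4 + c13*(ξ₁:ℂ)^3 + c12*(ξ₁:ℂ)^2
            + c11*(ξ₁:ℂ) + c10)
          + (c04*(ξ₁:ℂ)^4 + c03*(ξ₁:ℂ)^3 + c02*(ξ₁:ℂ)^2 + c01*(ξ₁:ℂ) + c00)‖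
        ≤ ‖(ξ₂:ℂ) * (c14*(ξ₁:ℂ)^4 + c13*(ξ₁:ℂ)^3 + c12*(ξ₁:ℂ)^2
            + c11*(ξ₁:ℂ) + c10)‖
          + ‖c04*(ξ₁:ℂ)^4 + c03*(ξ₁:ℂ)^3 + c02*(ξ₁:ℂ)^2 + c01*(ξ₁:ℂ) + c00‖ :=
          norm_add_le _ _
      _ = |ξ₂| * ‖c14*(ξ₁:ℂ)^4 + c13*(ξ₁:ℂ)^3 + c12*(ξ₁:ℂ)^2
            + c11*(ξ₁:ℂ) + c10‖
          + ‖c04*(ξ₁:ℂ)^4 + c03*(ξ₁:ℂ)^3 + c02*(ξ₁:ℂ)^2 + c01*(ξ₁:ℂ) + c00‖ := by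
          rw [norm_mul, Complex.norm_real, Real.norm_eq_abs]
      _ ≤ |ξ₂| * (S1 * (1 + ξ₁^4)) + S0 * (1 + ξ₁^4) :=
          add_le_add (mul_le_mul_of_nonneg_left hb1 (abs_nonneg ξ₂)) hb0
      _ ≤ (S1 + S0 + 1) * (1 + ξ₁^4) * |ξ₂| := by
          nlinarith [mul_nonneg (mul_nonneg (by linarith : (0:ℝ) ≤ S0 + 1) hq)
            (by linarith : (0:ℝ) ≤ |ξ₂| - 1), mul_nonneg hS1nn hq,
            mul_nonneg (mul_nonneg hS1nn hq) (by linarith : (0:ℝ) ≤ |ξ₂| - 1)]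
  calc ‖(ξ₂:ℂ) * (c14*(ξ₁:ℂ)^4 + c13*(ξ₁:ℂ)^3 + c12*(ξ₁:ℂ)^2
          + c11*(ξ₁:ℂ) + c10)
        + (c04*(ξ₁:ℂ)^4 + c03*(ξ₁:ℂ)^3 + c02*(ξ₁:ℂ)^2 + c01*(ξ₁:ℂ) + c00)‖
        / (4*m * ‖Δc m ξ₁ ξ₂‖)
      ≤ ((S1 + S0 + 1) * (1 + ξ₁^4) * |ξ₂|) / (4*m * (3*m*ξ₂^2)) := by
        apply div_le_div₀ (by positivity) hnum (by positivity) ?_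
        have : (0:ℝ) < 4*m := by positivity
        nlinarith
    _ = (S1 + S0 + 1) / (12 * m^2) * (1 + ξ₁^4) / |ξ₂| := by
        have habs : |ξ₂| ≠ 0 := by intro h; rw [h] at hxi2; linarith
        have h12 : 4*m*(3*m*ξ₂^2) = 12*m^2*(|ξ₂| * |ξ₂|) := by
          have : |ξ₂| * |ξ₂| = ξ₂^2 := by rw [← abs_mul, ← sq, _root_.abs_of_nonneg (sq_nonneg ξ₂)]
          rw [this]; ring
        rw [h12]
        generalize |ξ₂| = t at habs ⊢
        field_simp
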